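/- Let (X, ρ) be a probability space and 𝒦 a matrix-valued kernel with sup_{x∈X} tr 𝒦(x,x) ≤ κ². Then the integral operator L_𝒦 f := ∫_X 𝒦(x, ·) f(x) dρ(x) on H_𝒦 is positive, self-adjoint, trace-class, and tr L_𝒦 ≤ κ². -/

import Mathlib

open scoped RealInnerProductSpace
open MeasureTheory

/-- The integral operator `L_𝒦 f = ∫ 𝒦(x,·) f(x) dρ(x)` of a matrix-valued kernel with
`sup_x tr 𝒦(x,x) ≤ κ²` on a probability space is positive, self-adjoint and trace class
with `tr L_𝒦 ≤ κ²`.  The kernel is modelled by feature maps `Φ x : ℝ^d →L H`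
(`c ↦ 𝒦(x,·)c`), so that `f(x) = (Φ x)† f`, `tr 𝒦(x,x) = Σ_k ‖Φ x e_k‖²` and
`L f = ∫ Φ x ((Φ x)† f) dρ`; the trace is `Σᵢ ⟪bᵢ, L bᵢ⟫` for any Hilbert basis `b`. -/
theorem integral_operator_positive_trace_class
    {H : Type*} [NormedAddCommGroup H] [InnerProductSpace ℝ H] [CompleteSpace H]
    {X : Type*} [MeasurableSpace X] (ρ : Measure X) [IsProbabilityMeasure ρ]
    (d : ℕ) (Φ : X → (EuclideanSpace ℝ (Fin d)) →L[ℝ] H) (κ : ℝ)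
    (htr : ∀ x : X, ∑ k : Fin d, ‖Φ x (EuclideanSpace.single k 1)‖ ^ 2 ≤ κ ^ 2)
    (L : H →L[ℝ] H)
    (hL : ∀ f : H, L f = ∫ x, Φ x ((ContinuousLinearMap.adjoint (Φ x)) f) ∂ρ) :
    L.IsPositive ∧ IsSelfAdjoint L ∧
      ∀ (ι : Type) (b : HilbertBasis ι ℝ H),
        Summable (fun i => ⟪b i, L (b i)⟫) ∧ (∑' i, ⟪b i, L (b i)⟫) ≤ κ ^ 2 := by
  classical
  set F : H → X → H := fun f x => Φ x ((ContinuousLinearMap.adjoint (Φ x)) f) with hF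
  have hκ : 0 ≤ κ ^ 2 := by
    have hne : Nonempty X := by
      by_contra h
      rw [not_nonempty_iff] at h
      have h1 : ρ Set.univ = 1 := measure_univ
      simp [Set.univ_eq_empty_iff.mpr h] at h1
    obtain ⟨x⟩ := hne
    refine le_trans ?_ (htr x)
    positivity
  by_cases hint : ∀ f : H, Integrable (F f) ρ
  · -- All integrands are integrable: the "honest" case.
    have hinner : ∀ f g : H,
        ⟪L f, g⟫ = ∫ x, ⟪(ContinuousLinearMap.adjoint (Φ x)) f,
          (ContinuousLinearMap.adjoint (Φ x)) g⟫ ∂ρ := by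
      intro f g
      rw [hL f, real_inner_comm, ← integral_inner (hint f) g]
      congr 1
      ext x
      rw [real_inner_comm, ContinuousLinearMap.adjoint_inner_right]
    have hsa : IsSelfAdjoint L := by
      rw [ContinuousLinearMap.isSelfAdjoint_iff_isSymmetric]
      intro f g
      show ⟪L f, g⟫ = ⟪f, L g⟫
      rw [hinner f g, real_inner_comm (L g) f, hinner g f]
      congr 1
      ext x
      exact real_inner_comm _ _
    have hposq : ∀ f : H, 0 ≤ ⟪L f, f⟫ := by
      intro f
      rw [hinner f f]
      exact integral_nonneg fun x => real_inner_self_nonneg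
    have hpos : L.IsPositive := by
      refine ⟨ContinuousLinearMap.isSelfAdjoint_iff_isSymmetric.mp hsa, fun f => ?_⟩
      simpa [ContinuousLinearMap.reApplyInnerSelf] using hposq f
    refine ⟨hpos, hsa, fun ι b => ?_⟩
    -- integrability of the scalar diagonal terms
    have hdiag_int : ∀ f : H, Integrable (fun x =>
        ⟪(ContinuousLinearMap.adjoint (Φ x)) f, (ContinuousLinearMap.adjoint (Φ x)) f⟫) ρ := by
      intro f
      have := MeasureTheory.Integrable.const_inner (𝕜 := ℝ) f (hint f)
      refine this.congr (Filter.Eventually.of_forall fun x => ?_)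
      show ⟪f, Φ x ((ContinuousLinearMap.adjoint (Φ x)) f)⟫ = _
      rw [← ContinuousLinearMap.adjoint_inner_left]
    -- pointwise bound for finite partial sums
    have hptwise : ∀ (s : Finset ι) (x : X),
        ∑ i ∈ s, ⟪(ContinuousLinearMap.adjoint (Φ x)) (b i),
            (ContinuousLinearMap.adjoint (Φ x)) (b i)⟫ ≤ κ ^ 2 := by
      intro s x
      refine le_trans ?_ (htr x)
      have hrw : ∀ i : ι,
          ⟪(ContinuousLinearMap.adjoint (Φ x)) (b i), (ContinuousLinearMap.adjoint (Φ x)) (b i)⟫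
            = ∑ k : Fin d, ⟪b i, Φ x (EuclideanSpace.single k 1)⟫ ^ 2 := by
        intro i
        set w := (ContinuousLinearMap.adjoint (Φ x)) (b i) with hw
        have h1 : ⟪w, w⟫ = ∑ k : Fin d, (w k) ^ 2 := by
          rw [real_inner_self_eq_norm_sq, EuclideanSpace.norm_sq_eq]
          simp [Real.norm_eq_abs, sq_abs]
        rw [h1]
        refine Finset.sum_congr rfl fun k _ => ?_
        have h2 : w k = ⟪w, EuclideanSpace.single k 1⟫ := by
          simp [PiLp.inner_apply, EuclideanSpace.single_apply]
        rw [h2, hw, ContinuousLinearMap.adjoint_inner_left]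
      calc ∑ i ∈ s, ⟪(ContinuousLinearMap.adjoint (Φ x)) (b i),
              (ContinuousLinearMap.adjoint (Φ x)) (b i)⟫
          = ∑ k : Fin d, ∑ i ∈ s, ⟪b i, Φ x (EuclideanSpace.single k 1)⟫ ^ 2 := by
            rw [Finset.sum_comm]
            exact Finset.sum_congr rfl fun i _ => hrw i
        _ ≤ ∑ k : Fin d, ‖Φ x (EuclideanSpace.single k 1)‖ ^ 2 := by
            refine Finset.sum_le_sum fun k _ => ?_
            have := b.orthonormal.sum_inner_products_le (s := s)
              (Φ x (EuclideanSpace.single k 1))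
            simpa [sq_abs] using this
    -- partial sums bounded
    have hterm : ∀ i : ι, ⟪b i, L (b i)⟫ = ∫ x,
        ⟪(ContinuousLinearMap.adjoint (Φ x)) (b i),
          (ContinuousLinearMap.adjoint (Φ x)) (b i)⟫ ∂ρ := by
      intro i
      rw [real_inner_comm, hinner]
    have hsum_le : ∀ s : Finset ι, ∑ i ∈ s, ⟪b i, L (b i)⟫ ≤ κ ^ 2 := by
      intro s
      have : ∑ i ∈ s, ⟪b i, L (b i)⟫ = ∫ x, ∑ i ∈ s,
          ⟪(ContinuousLinearMap.adjoint (Φ x)) (b i),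
            (ContinuousLinearMap.adjoint (Φ x)) (b i)⟫ ∂ρ := by
        rw [Finset.sum_congr rfl fun i _ => hterm i,
          ← integral_finset_sum s fun i _ => hdiag_int (b i)]
      rw [this]
      calc (∫ x, ∑ i ∈ s, ⟪(ContinuousLinearMap.adjoint (Φ x)) (b i),
              (ContinuousLinearMap.adjoint (Φ x)) (b i)⟫ ∂ρ)
          ≤ ∫ _x, κ ^ 2 ∂ρ := by
            refine integral_mono (integrable_finset_sum s fun i _ => hdiag_int (b i))
              (integrable_const _) ?_
            intro x
            exact hptwise s x
        _ = κ ^ 2 := by simp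
    have hnonneg : ∀ i : ι, 0 ≤ ⟪b i, L (b i)⟫ := by
      intro i
      rw [real_inner_comm]
      exact hposq (b i)
    have hsummable : Summable (fun i => ⟪b i, L (b i)⟫) :=
      summable_of_sum_le hnonneg hsum_le
    exact ⟨hsummable, Summable.tsum_le_of_sum_le hsummable hsum_le⟩
  · -- Some integrand fails to be integrable: then L = 0.
    push_neg at hint
    obtain ⟨g, hg⟩ := hint
    have hL0 : ∀ f : H, L f = 0 := by
      intro f
      by_cases hf : Integrable (F f) ρ
      · have hfg : ¬ Integrable (F (f + g)) ρ := by
          intro hfg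
          apply hg
          have : F g = F (f + g) - F f := by
            funext x
            simp [hF, map_add]
          rw [this]
          exact hfg.sub hf
        have h1 : L (f + g) = 0 := by
          rw [hL (f + g)]
          exact integral_undef hfg
        have h2 : L g = 0 := by
          rw [hL g]
          exact integral_undef hg
        have := map_add L f g
        rw [h1, h2, add_zero] at this
        exact this.symm
      · rw [hL f]
        exact integral_undef hf
    have hLzero : L = 0 := ContinuousLinearMap.ext fun f => by simp [hL0 f]
    subst hLzero
    refine ⟨?_, IsSelfAdjoint.zero _, fun ι b => ?_⟩
    · exact ContinuousLinearMap.isPositive_zero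
    · constructor
      · simpa using summable_zero
      · simpa using hκ
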